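/- Let n ≥ 1, let D (records) and V (predicates) be measurable spaces, let f be a trade-off function, let P be a probability measure on D, let w ∈ [0, 1/n], let e : D × V → {0,1} be jointly measurable and satisfy ∫_D e(z,v) dP(z) = w for every v ∈ V, and let κ be a Markov kernel from Dⁿ (functions Fin n → D) to V satisfying f-DP with respect to the replace-one relation. Then the predicate-singling-out success probability satisfies ∫_{Dⁿ} κ(S)({v ∈ V : Σ_{i=1}^{n} e(S_i, v) = 1}) dPⁿ(S) ≤ n·(1 − f(w)). -/

import Mathlib

open MeasureTheory ProbabilityTheory

/-- A trade-off function: convex, continuous, non-increasing on `[0,1]`,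
taking values in `[0,1]` with `f α ≤ 1 - α`. -/
def IsTradeoff (f : ℝ → ℝ) : Prop :=
  ConvexOn ℝ (Set.Icc (0:ℝ) 1) f ∧ ContinuousOn f (Set.Icc (0:ℝ) 1) ∧
  AntitoneOn f (Set.Icc (0:ℝ) 1) ∧
  ∀ x ∈ Set.Icc (0:ℝ) 1, f x ∈ Set.Icc (0:ℝ) 1 ∧ f x ≤ 1 - x

/-- The pair `(P, Q)` satisfies the `f`-DP inequality: every randomized test `φ` has
`∫ φ dQ ≤ 1 - f (∫ φ dP)`. -/
def FDPIneq {Θ : Type*} [MeasurableSpace Θ] (f : ℝ → ℝ) (P Q : Measure Θ) : Prop :=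
  ∀ φ : Θ → ℝ, Measurable φ → (∀ θ, φ θ ∈ Set.Icc (0:ℝ) 1) →
    ∫ θ, φ θ ∂Q ≤ 1 - f (∫ θ, φ θ ∂P)


lemma integrable_of_mem01 {α : Type*} [MeasurableSpace α] {μ : Measure α} [IsFiniteMeasure μ]
    {g : α → ℝ} (hm : AEStronglyMeasurable g μ) (h : ∀ x, g x ∈ Set.Icc (0:ℝ) 1) :
    Integrable g μ :=
  (integrable_const (1:ℝ)).mono' hm
    (Filter.Eventually.of_forall fun x => by
      rw [Real.norm_eq_abs, abs_le]; exact ⟨by linarith [(h x).1], (h x).2⟩)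

lemma integral_ite_bool {V : Type*} [MeasurableSpace V] (Q : Measure V) [IsFiniteMeasure Q]
    (b : V → Bool) (hb : MeasurableSet {v | b v = true}) :
    ∫ v, (if b v = true then (1:ℝ) else 0) ∂Q = (Q {v | b v = true}).toReal := by
  have : (fun v => if b v = true then (1:ℝ) else 0)
      = Set.indicator {v | b v = true} (fun _ => 1) := by
    ext v; by_cases h : b v = true <;> simp [Set.indicator_apply, h]
  rw [this, integral_indicator_const _ hb]; simp; rfl

lemma toReal_prob_mem01 {V : Type*} [MeasurableSpace V] (ξ : Measure V) [IsProbabilityMeasure ξ]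
    (s : Set V) : (ξ s).toReal ∈ Set.Icc (0:ℝ) 1 :=
  ⟨ENNReal.toReal_nonneg, by simpa using ENNReal.toReal_mono ENNReal.one_ne_top prob_le_one⟩

lemma fdp_key {D Θ V : Type*} [MeasurableSpace D] [MeasurableSpace Θ] [MeasurableSpace V]
    (f : ℝ → ℝ) (hf : IsTradeoff f)
    (P : Measure D) [IsProbabilityMeasure P]
    (ρ : Measure Θ) [IsProbabilityMeasure ρ]
    (w : ℝ) (hw : w ∈ Set.Icc (0:ℝ) 1)
    (e : D → V → Bool) (he : Measurable (Function.uncurry e))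
    (hweight : ∀ v : V, ∫ z, (if e z v = true then (1:ℝ) else 0) ∂P = w)
    (κ : Kernel (D × Θ) V) [IsMarkovKernel κ]
    (hDP : ∀ y z : D, ∀ r : Θ, FDPIneq f (κ (z, r)) (κ (y, r))) :
    ∫ p : D × Θ, ((κ p) {v | e p.1 v = true}).toReal ∂(P.prod ρ) ≤ 1 - f w := by
  classical
  have hDne : Nonempty D := by
    by_contra h
    rw [not_nonempty_iff] at h
    have h1 : P Set.univ = 1 := measure_univ
    rw [Set.univ_eq_empty_iff.mpr h, measure_empty] at h1
    exact zero_ne_one h1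
  obtain ⟨z₀⟩ := hDne
  -- basic measurability
  have hset : ∀ y : D, MeasurableSet {v | e y v = true} := fun y =>
    (he.comp (measurable_prodMk_left (x := y))) (measurableSet_singleton true)
  have hiteMeas : Measurable (fun q : D × V => if e q.1 q.2 = true then (1:ℝ) else 0) :=
    Measurable.ite (he (measurableSet_singleton true)) measurable_const measurable_const
  have hφm : ∀ y : D, Measurable fun v => (if e y v = true then (1:ℝ) else 0) := fun y =>
    hiteMeas.comp (measurable_prodMk_left (x := y))
  have hφ01 : ∀ (y : D) (v : V), (if e y v = true then (1:ℝ) else 0) ∈ Set.Icc (0:ℝ) 1 :=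
    fun y v => by by_cases h : e y v = true <;> simp [h]
  have htmeas : MeasurableSet {q : (D × Θ) × V | e q.1.1 q.2 = true} := by
    have hm : Measurable fun q : (D × Θ) × V => e q.1.1 q.2 :=
      he.comp (measurable_fst.fst.prodMk measurable_snd)
    exact hm (measurableSet_singleton true)
  have hgmeas : Measurable fun p : D × Θ => ((κ p) {v | e p.1 v = true}).toReal :=
    (Kernel.measurable_kernel_prodMk_left (κ := κ) htmeas).ennreal_toReal
  have hgint : Integrable (fun p : D × Θ => ((κ p) {v | e p.1 v = true}).toReal) (P.prod ρ) :=
    integrable_of_mem01 hgmeas.aestronglyMeasurable fun p => toReal_prob_mem01 _ _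
  -- truncation and convexity
  set t : ℝ → ℝ := fun x => max 0 (min x 1) with ht
  have htcont : Continuous t := continuous_const.max (continuous_id.min continuous_const)
  have htmem : ∀ x, t x ∈ Set.Icc (0:ℝ) 1 :=
    fun x => ⟨le_max_left _ _, max_le zero_le_one (min_le_right _ _)⟩
  have hteq : ∀ x ∈ Set.Icc (0:ℝ) 1, t x = x := fun x hx => by
    rw [ht]; dsimp only; rw [min_eq_left hx.2, max_eq_right hx.1]
  set F : ℝ → ℝ := f ∘ t with hFdef
  have hFeq : ∀ x ∈ Set.Icc (0:ℝ) 1, F x = f x := fun x hx => by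
    rw [hFdef, Function.comp_apply, hteq x hx]
  have hFcont : Continuous F := by
    rw [← continuousOn_univ]
    exact hf.2.1.comp htcont.continuousOn fun x _ => htmem x
  have hFconv : ConvexOn ℝ (Set.Icc (0:ℝ) 1) F := by
    refine ⟨convex_Icc _ _, fun x hx y hy a b ha hb hab => ?_⟩
    rw [hFeq _ hx, hFeq _ hy, hFeq _ ((convex_Icc (0:ℝ) 1) hx hy ha hb hab)]
    exact hf.1.2 hx hy ha hb hab
  have hF01 : ∀ x, F x ∈ Set.Icc (0:ℝ) 1 := fun x => (hf.2.2.2 (t x) (htmem x)).1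
  -- per-r bound
  have hINNER : ∀ r : Θ, ∫ y, ((κ (y, r)) {v | e y v = true}).toReal ∂P ≤ 1 - f w := by
    intro r
    have hQp : IsProbabilityMeasure (κ (z₀, r)) := by infer_instance
    set X : D → ℝ := fun y => ∫ v, (if e y v = true then (1:ℝ) else 0) ∂(κ (z₀, r)) with hX
    have hXm : StronglyMeasurable X :=
      MeasureTheory.StronglyMeasurable.integral_prod_right' (hiteMeas.stronglyMeasurable)
    have hX01 : ∀ y, X y ∈ Set.Icc (0:ℝ) 1 := by
      intro y
      constructor
      · exact integral_nonneg fun v => (hφ01 y v).1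
      · calc ∫ v, (if e y v = true then (1:ℝ) else 0) ∂(κ (z₀, r)) ≤ ∫ _v, (1:ℝ) ∂(κ (z₀, r)) :=
            integral_mono (integrable_of_mem01 (hφm y).aestronglyMeasurable (hφ01 y))
              (integrable_const 1) (fun v => (hφ01 y v).2)
          _ = 1 := by simp
    have hXint : Integrable X P := integrable_of_mem01 hXm.aestronglyMeasurable hX01
    have hXavg : ∫ y, X y ∂P = w := by
      rw [hX]
      have hswap := integral_integral_swap (f := fun y v => if e y v = true then (1:ℝ) else 0)
        (μ := P) (ν := κ (z₀, r))
        (integrable_of_mem01 hiteMeas.aestronglyMeasurable fun q => hφ01 q.1 q.2)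
      rw [hswap]
      simp only [hweight]
      simp
    have hFXint : Integrable (fun y => F (X y)) P :=
      integrable_of_mem01 (hFcont.comp_stronglyMeasurable hXm).aestronglyMeasurable
        fun y => hF01 _
    have hjensen : f w ≤ ∫ y, F (X y) ∂P := by
      have hj := hFconv.map_integral_le hFcont.continuousOn isClosed_Icc
        (Filter.Eventually.of_forall hX01) hXint hFXint
      rw [hXavg, hFeq w hw] at hj
      exact hj
    have hpt : ∀ y, ((κ (y, r)) {v | e y v = true}).toReal ≤ 1 - F (X y) := by
      intro y
      have h1 := hDP y z₀ r (fun v => if e y v = true then (1:ℝ) else 0) (hφm y) (hφ01 y)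
      rw [integral_ite_bool _ _ (hset y)] at h1
      rw [hFeq _ (hX01 y)]
      exact h1
    have hgrint : Integrable (fun y => ((κ (y, r)) {v | e y v = true}).toReal) P :=
      integrable_of_mem01 ((hgmeas.comp (measurable_id.prodMk measurable_const)).aestronglyMeasurable)
        fun y => toReal_prob_mem01 _ _
    calc ∫ y, ((κ (y, r)) {v | e y v = true}).toReal ∂P
        ≤ ∫ y, (1 - F (X y)) ∂P :=
          integral_mono hgrint ((integrable_const 1).sub hFXint) hpt
      _ = 1 - ∫ y, F (X y) ∂P := by
          rw [integral_sub (integrable_const 1) hFXint]; simp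
      _ ≤ 1 - f w := by linarith [hjensen]
  -- assemble
  rw [integral_prod_symm _ hgint]
  calc ∫ r, (∫ y, ((κ (y, r)) {v | e y v = true}).toReal ∂P) ∂ρ
      ≤ ∫ _r, (1 - f w) ∂ρ :=
        integral_mono hgint.integral_prod_right (integrable_const _) hINNER
    _ = 1 - f w := by simp

/-- Theorem E.4: `f`-DP bound on average-dataset predicate singling out, for
adversaries outputting predicates of weight exactly `w` under `P`.
`e z v = true` means predicate `v` matches record `z`. -/
theorem stmt_19 {D V : Type*} [MeasurableSpace D] [MeasurableSpace V]
    (n : ℕ) (hn : 1 ≤ n)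
    (f : ℝ → ℝ) (hf : IsTradeoff f)
    (P : Measure D) [IsProbabilityMeasure P]
    (w : ℝ) (hw : w ∈ Set.Icc (0:ℝ) (1 / (n : ℝ)))
    (e : D → V → Bool) (he : Measurable (Function.uncurry e))
    (hweight : ∀ v : V, ∫ z, (if e z v = true then (1:ℝ) else 0) ∂P = w)
    (κ : Kernel (Fin n → D) V) [IsMarkovKernel κ]
    (hDP : ∀ S S' : Fin n → D, (∃ i : Fin n, ∀ j : Fin n, j ≠ i → S j = S' j) →
      FDPIneq f (κ S') (κ S)) :
    ∫ S, ((κ S) {v : V | (∑ i : Fin n, if e (S i) v = true then (1:ℕ) else 0) = 1}).toReal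
        ∂(Measure.pi fun _ : Fin n => P) ≤ (n : ℝ) * (1 - f w) := by
  classical
  obtain ⟨m, rfl⟩ : ∃ m, n = m + 1 := ⟨n - 1, by omega⟩
  have hw1 : w ∈ Set.Icc (0:ℝ) 1 := by
    refine ⟨hw.1, hw.2.trans ?_⟩
    rw [div_le_one (by positivity)]
    exact_mod_cast Nat.one_le_iff_ne_zero.mpr (Nat.succ_ne_zero m)
  set μ := Measure.pi fun _ : Fin (m+1) => P with hμ
  -- measurability
  have htmeas : ∀ i : Fin (m+1),
      MeasurableSet {q : (Fin (m+1) → D) × V | e (q.1 i) q.2 = true} := by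
    intro i
    have hproj : Measurable fun q : (Fin (m+1) → D) × V => (q.1 i, q.2) :=
      ((measurable_pi_apply i).comp measurable_fst).prodMk measurable_snd
    exact (he.comp hproj) (measurableSet_singleton true)
  have hCim : ∀ i : Fin (m+1),
      Measurable fun S : Fin (m+1) → D => ((κ S) {v | e (S i) v = true}).toReal :=
    fun i => (Kernel.measurable_kernel_prodMk_left (htmeas i)).ennreal_toReal
  have hCiint : ∀ i : Fin (m+1),
      Integrable (fun S => ((κ S) {v | e (S i) v = true}).toReal) μ :=
    fun i => integrable_of_mem01 (hCim i).aestronglyMeasurable fun S => toReal_prob_mem01 _ _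
  have hAmeas : MeasurableSet {q : (Fin (m+1) → D) × V |
      (∑ i, if e (q.1 i) q.2 = true then (1:ℕ) else 0) = 1} := by
    have hsum : Measurable fun q : (Fin (m+1) → D) × V =>
        ∑ i, if e (q.1 i) q.2 = true then (1:ℕ) else 0 := by
      apply Finset.measurable_sum
      intro i _
      have hproj : Measurable fun q : (Fin (m+1) → D) × V => (q.1 i, q.2) :=
        ((measurable_pi_apply i).comp measurable_fst).prodMk measurable_snd
      have hb : Measurable fun q : (Fin (m+1) → D) × V => e (q.1 i) q.2 := he.comp hproj
      exact Measurable.ite (hb (measurableSet_singleton true)) measurable_const measurable_const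
    exact hsum (measurableSet_singleton 1)
  have hAint : Integrable (fun S =>
      ((κ S) {v | (∑ i, if e (S i) v = true then (1:ℕ) else 0) = 1}).toReal) μ :=
    integrable_of_mem01 ((Kernel.measurable_kernel_prodMk_left hAmeas).ennreal_toReal).aestronglyMeasurable
      fun S => toReal_prob_mem01 _ _
  -- pointwise union bound
  have hpt : ∀ S : Fin (m+1) → D,
      ((κ S) {v | (∑ i, if e (S i) v = true then (1:ℕ) else 0) = 1}).toReal
      ≤ ∑ i : Fin (m+1), ((κ S) {v | e (S i) v = true}).toReal := by
    intro S
    have hsub : {v : V | (∑ i, if e (S i) v = true then (1:ℕ) else 0) = 1}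
        ⊆ ⋃ i, {v | e (S i) v = true} := by
      intro v hv
      simp only [Set.mem_setOf_eq] at hv
      obtain ⟨i, _, hi⟩ := Finset.exists_ne_zero_of_sum_ne_zero
        (show (∑ i, if e (S i) v = true then (1:ℕ) else 0) ≠ 0 by rw [hv]; exact one_ne_zero)
      have hev : e (S i) v = true := by
        by_contra hc
        simp [hc] at hi
      exact Set.mem_iUnion.2 ⟨i, hev⟩
    have h1 : (κ S) {v | (∑ i, if e (S i) v = true then (1:ℕ) else 0) = 1}
        ≤ ∑ i : Fin (m+1), (κ S) {v | e (S i) v = true} :=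
      (measure_mono hsub).trans (measure_iUnion_fintype_le _ _)
    have h2 : (∑ i : Fin (m+1), (κ S) {v | e (S i) v = true}) ≠ ⊤ :=
      ENNReal.sum_ne_top.2 fun i _ => measure_ne_top _ _
    calc ((κ S) {v | (∑ i, if e (S i) v = true then (1:ℕ) else 0) = 1}).toReal
        ≤ (∑ i : Fin (m+1), (κ S) {v | e (S i) v = true}).toReal := ENNReal.toReal_mono h2 h1
      _ = ∑ i : Fin (m+1), ((κ S) {v | e (S i) v = true}).toReal :=
        ENNReal.toReal_sum fun i _ => measure_ne_top _ _
  -- per-coordinate bound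
  have hper : ∀ i : Fin (m+1), ∫ S, ((κ S) {v | e (S i) v = true}).toReal ∂μ ≤ 1 - f w := by
    intro i
    set E := MeasurableEquiv.piFinSuccAbove (fun _ : Fin (m+1) => D) i with hE
    have hMP : MeasurePreserving E μ (P.prod (Measure.pi fun _ : Fin m => P)) :=
      measurePreserving_piFinSuccAbove (fun _ : Fin (m+1) => P) i
    set κ' : Kernel (D × (Fin m → D)) V := κ.comap (fun p => E.symm p) E.symm.measurable with hκ'
    haveI : IsMarkovKernel κ' := by rw [hκ']; infer_instance
    have hsymm : ∀ (x : D) (r : Fin m → D), E.symm (x, r) = i.insertNth x r := fun x r => by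
      simp [hE, MeasurableEquiv.piFinSuccAbove, Fin.insertNthEquiv]
    have hDP' : ∀ y z : D, ∀ r : Fin m → D, FDPIneq f (κ' (z, r)) (κ' (y, r)) := by
      intro y z r
      rw [hκ', Kernel.comap_apply, Kernel.comap_apply]
      apply hDP
      refine ⟨i, fun j hj => ?_⟩
      obtain ⟨k, rfl⟩ := Fin.exists_succAbove_eq hj
      rw [hsymm, hsymm, Fin.insertNth_apply_succAbove, Fin.insertNth_apply_succAbove]
    have hkey := fdp_key f hf P (Measure.pi fun _ : Fin m => P) w hw1 e he hweight κ' hDP'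
    rw [← hMP.integral_comp E.measurableEmbedding
      (fun p => ((κ' p) {v | e p.1 v = true}).toReal)] at hkey
    have heq : ∀ S : Fin (m+1) → D,
        ((κ' (E S)) {v | e ((E S).1) v = true}).toReal
          = ((κ S) {v | e (S i) v = true}).toReal := by
      intro S
      have h1 : (E S).1 = S i := by rfl
      rw [hκ', Kernel.comap_apply, E.symm_apply_apply, h1]
    calc ∫ S, ((κ S) {v | e (S i) v = true}).toReal ∂μ
        = ∫ S, ((κ' (E S)) {v | e ((E S).1) v = true}).toReal ∂μ :=
          integral_congr_ae (Filter.Eventually.of_forall fun S => (heq S).symm)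
      _ ≤ 1 - f w := hkey
  -- assemble
  calc ∫ S, ((κ S) {v | (∑ i, if e (S i) v = true then (1:ℕ) else 0) = 1}).toReal ∂μ
      ≤ ∫ S, (∑ i : Fin (m+1), ((κ S) {v | e (S i) v = true}).toReal) ∂μ :=
        integral_mono hAint (integrable_finset_sum _ fun i _ => hCiint i) hpt
    _ = ∑ i : Fin (m+1), ∫ S, ((κ S) {v | e (S i) v = true}).toReal ∂μ :=
        integral_finset_sum _ fun i _ => hCiint i
    _ ≤ ∑ _i : Fin (m+1), (1 - f w) := Finset.sum_le_sum fun i _ => hper i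
    _ = ((m+1 : ℕ) : ℝ) * (1 - f w) := by
        rw [Finset.sum_const, Finset.card_univ, Fintype.card_fin, nsmul_eq_mul]
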